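/- Let D ≥ 1, E ≥ 0, δ > 0, C ⊆ R^D × [−δ,+δ]^E compact, and α ∈ R^{D+E} with ‖α‖₂ ≤ 1. Let ρ₀ := max_{z∈C} |αᵀz|, C' := {z ∈ C : |αᵀz| ≤ ρ₀/(2(D+1))}, P : R^{D+E} → R^D the orthogonal projection onto the first D coordinates, ρ₁ := max_{z∈C} |αᵀPz| and ρ₁' := max_{z∈C'} |αᵀPz|. If ρ₀ ≥ (4D+5)√E·δ, then ρ₁' ≤ ρ₁/(D+1). -/

import Mathlib

theorem thin_slice_projection (D E : ℕ) (hD : 1 ≤ D) (δ : ℝ) (hδ : 0 < δ)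
    (C : Set (Fin (D + E) → ℝ)) (hC : IsCompact C)
    (hCbox : ∀ z ∈ C, ∀ i : Fin (D + E), D ≤ (i : ℕ) → |z i| ≤ δ)
    (α : Fin (D + E) → ℝ) (hα : ∑ i, (α i) ^ 2 ≤ 1)
    (ρ₀ ρ₁ ρ₁' : ℝ) (hρ₀pos : 0 < ρ₀)
    (h₀ : IsGreatest ((fun z => |∑ i, α i * z i|) '' C) ρ₀)
    (h₁ : IsGreatest ((fun z => |∑ i, α i * (if (i : ℕ) < D then z i else 0)|) '' C) ρ₁)
    (h₁' : IsGreatest ((fun z => |∑ i, α i * (if (i : ℕ) < D then z i else 0)|) ''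
        {z ∈ C | |∑ i, α i * z i| ≤ ρ₀ / (2 * (D + 1))}) ρ₁')
    (hbig : (4 * D + 5) * Real.sqrt E * δ ≤ ρ₀) :
    ρ₁' ≤ ρ₁ / (D + 1) := by
  set β := Real.sqrt E * δ with hβdef
  have hβ : 0 ≤ β := by positivity
  set S := Finset.univ.filter fun i : Fin (D+E) => ¬ ((i:ℕ) < D) with hS
  have hcard : S.card = E := by
    rw [hS, Finset.card_filter, Fin.sum_univ_add]
    simp
  have hsumα : ∑ i ∈ S, |α i| ≤ Real.sqrt E := by
    have h3 : (∑ i ∈ S, |α i|) ^ 2 ≤ S.card * ∑ i ∈ S, |α i| ^ 2 :=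
      sq_sum_le_card_mul_sum_sq
    have h4 : ∑ i ∈ S, |α i| ^ 2 ≤ 1 := by
      refine le_trans ?_ hα
      simp only [sq_abs]
      exact Finset.sum_le_sum_of_subset_of_nonneg (Finset.subset_univ S)
        (fun i _ _ => sq_nonneg _)
    have h5 : (∑ i ∈ S, |α i|) ^ 2 ≤ (E : ℝ) := by
      calc (∑ i ∈ S, |α i|) ^ 2 ≤ S.card * ∑ i ∈ S, |α i| ^ 2 := h3
        _ ≤ (E : ℝ) * 1 := by
            rw [hcard]
            exact mul_le_mul_of_nonneg_left h4 (Nat.cast_nonneg E)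
        _ = (E : ℝ) := mul_one _
    have h6 : 0 ≤ ∑ i ∈ S, |α i| := Finset.sum_nonneg fun i _ => abs_nonneg _
    nlinarith [Real.sq_sqrt (Nat.cast_nonneg E : (0:ℝ) ≤ E), Real.sqrt_nonneg (E : ℝ)]
  have key : ∀ z ∈ C,
      |(∑ i, α i * z i) - ∑ i, α i * (if (i:ℕ) < D then z i else 0)| ≤ β := by
    intro z hz
    have h1 : (∑ i, α i * z i) - ∑ i, α i * (if (i:ℕ) < D then z i else 0)
        = ∑ i ∈ S, α i * z i := by
      rw [← Finset.sum_sub_distrib, hS, Finset.sum_filter]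
      congr 1; ext i
      by_cases h : (i:ℕ) < D <;> simp [h]
    rw [h1]
    calc |∑ i ∈ S, α i * z i| ≤ ∑ i ∈ S, |α i * z i| := Finset.abs_sum_le_sum_abs _ _
      _ ≤ ∑ i ∈ S, |α i| * δ := by
          refine Finset.sum_le_sum fun i hi => ?_
          rw [abs_mul]
          have hiD : D ≤ (i:ℕ) := by
            simp only [hS, Finset.mem_filter, not_lt] at hi
            exact hi.2
          exact mul_le_mul_of_nonneg_left (hCbox z hz i hiD) (abs_nonneg _)
      _ = (∑ i ∈ S, |α i|) * δ := (Finset.sum_mul ..).symm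
      _ ≤ β := mul_le_mul_of_nonneg_right hsumα hδ.le
  obtain ⟨z₀, hz₀C, hz₀⟩ := h₀.1
  have hρ₁ : ρ₀ - β ≤ ρ₁ := by
    have hk := key z₀ hz₀C
    have hmem := h₁.2 ⟨z₀, hz₀C, rfl⟩
    have habs := abs_sub_abs_le_abs_sub (∑ i, α i * z₀ i)
      (∑ i, α i * (if (i:ℕ) < D then z₀ i else 0))
    have hz₀' : |∑ i, α i * z₀ i| = ρ₀ := hz₀
    linarith
  obtain ⟨z', ⟨hz'C, hz'slice⟩, hz'⟩ := h₁'.1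
  have hρ₁' : ρ₁' ≤ ρ₀ / (2 * (D + 1)) + β := by
    have hk := key z' hz'C
    have habs := abs_sub_abs_le_abs_sub
      (∑ i, α i * (if (i:ℕ) < D then z' i else 0)) (∑ i, α i * z' i)
    rw [abs_sub_comm] at habs
    have hz'' : |∑ i, α i * (if (i:ℕ) < D then z' i else 0)| = ρ₁' := hz'
    linarith
  have hD1 : (1:ℝ) ≤ (D:ℝ) := by exact_mod_cast hD
  have hDpos : (0:ℝ) < (D:ℝ) + 1 := by linarith
  rw [le_div_iff₀ hDpos]
  have hbig' : (4 * (D:ℝ) + 5) * β ≤ ρ₀ := by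
    rw [hβdef, ← mul_assoc]; exact_mod_cast hbig
  have h7 : ρ₀ / (2 * ((D:ℝ) + 1)) * ((D:ℝ) + 1) = ρ₀ / 2 := by field_simp
  nlinarith [mul_le_mul_of_nonneg_right hρ₁' hDpos.le,
    mul_nonneg hβ (by linarith : (0:ℝ) ≤ (D:ℝ)), h7]
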